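/- arXiv:2107.04595 — 4 statements merged into one kernel-verified Lean document; each statement's English description precedes it below -/
import Mathlib

section
/- Let m, k ≥ 1, n = m + k, and let α_ν : ℝⁿ × ℝᵐ × ℝ → ℝ (ν = 1,…,k) be C² functions of (q₁,…,qₙ, q̇₁,…,q̇_m, t). Set ᾱ_ν := Σ_{i=1}^m q̇_i ∂α_ν/∂q̇_i, and define B_i^ν := Σ_{r=1}^m (∂²α_ν/(∂q̇_i∂q_r) q̇_r + ∂²α_ν/(∂q̇_i∂q̇_r) q̈_r) − ∂α_ν/∂q_i + Σ_{μ=1}^k (∂²α_ν/(∂q̇_i∂q_{m+μ}) α_μ − (∂α_μ/∂q̇_i)(∂α_ν/∂q_{m+μ})) + ∂²α_ν/(∂q̇_i∂t) and B̄_ν := Σ_{r=1}^m q̇_r (∂ᾱ_ν/∂q_r − ∂α_ν/∂q_r) + Σ_{μ=1}^k (α_μ ∂ᾱ_ν/∂q_{m+μ} − ᾱ_μ ∂α_ν/∂q_{m+μ}) + Σ_{r=1}^m q̈_r (∂ᾱ_ν/∂q̇_r − ∂α_ν/∂q̇_r) + ∂ᾱ_ν/∂t. Then along every C² admissible curve q(t)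 (i.e. satisfying q̇_{m+ν} = α_ν along the curve), one has Σ_{i=1}^m B_i^ν q̇_i = B̄_ν for every ν = 1,…,k and every t. -/
open scoped BigOperators

noncomputable section

/-- A phase point: positions `q ∈ ℝⁿ`, independent velocities `v ∈ ℝᵐ`, and time `t`. -/
abbrev PhasePt (n m : ℕ) : Type := (Fin n → ℝ) × (Fin m → ℝ) × ℝ

/-- Partial derivative of `f : PhasePt n m → ℝ` with respect to the coordinate `q i`. -/
def pq {n m : ℕ} (f : PhasePt n m → ℝ) (i : Fin n) (p : PhasePt n m) : ℝ :=
  fderiv ℝ f p (Pi.single i 1, 0, 0)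

/-- Partial derivative with respect to the independent velocity `q̇ r`. -/
def pv {n m : ℕ} (f : PhasePt n m → ℝ) (r : Fin m) (p : PhasePt n m) : ℝ :=
  fderiv ℝ f p (0, Pi.single r 1, 0)

/-- Partial derivative with respect to time. -/
def ptime {n m : ℕ} (f : PhasePt n m → ℝ) (p : PhasePt n m) : ℝ :=
  fderiv ℝ f p (0, 0, 1)

variable {m k : ℕ}

/-- The independent velocities `q̇ 1, …, q̇ m` along a curve. -/
def ivel (q : ℝ → Fin (m + k) → ℝ) (t : ℝ) : Fin m → ℝ :=
  fun i => deriv q t (Fin.castAdd k i)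

/-- The second derivatives `q̈ r` of the independent coordinates along a curve. -/
def iacc (q : ℝ → Fin (m + k) → ℝ) (t : ℝ) : Fin m → ℝ :=
  fun i => deriv (deriv q) t (Fin.castAdd k i)

/-- The phase-space lift `(q(t), q̇ ₁(t),…,q̇ _m(t), t)` of a curve. -/
def plift (q : ℝ → Fin (m + k) → ℝ) (t : ℝ) : PhasePt (m + k) m :=
  (q t, ivel q t, t)

/-- A curve is admissible when the constraints `q̇ (m+ν) = α ν` hold along it. -/
def Admissible (α : Fin k → PhasePt (m + k) m → ℝ) (q : ℝ → Fin (m + k) → ℝ) : Prop :=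
  ∀ (t : ℝ) (ν : Fin k), deriv q t (Fin.natAdd m ν) = α ν (plift q t)

/-- `ᾱ ν := ∑ i q̇ i ∂α ν/∂q̇ i`. -/
def abar (α : Fin k → PhasePt (m + k) m → ℝ) (ν : Fin k) (p : PhasePt (m + k) m) : ℝ :=
  ∑ i : Fin m, p.2.1 i * pv (α ν) i p

/-- The Voronec coefficient `B i ν` (formula (11) of the paper), along a curve. -/
def Bcoef (α : Fin k → PhasePt (m + k) m → ℝ) (q : ℝ → Fin (m + k) → ℝ)
    (t : ℝ) (ν : Fin k) (i : Fin m) : ℝ :=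
  (∑ r : Fin m, (pq (pv (α ν) i) (Fin.castAdd k r) (plift q t) * ivel q t r
      + pv (pv (α ν) i) r (plift q t) * iacc q t r))
  - pq (α ν) (Fin.castAdd k i) (plift q t)
  + (∑ μ : Fin k, (pq (pv (α ν) i) (Fin.natAdd m μ) (plift q t) * α μ (plift q t)
      - pv (α μ) i (plift q t) * pq (α ν) (Fin.natAdd m μ) (plift q t)))
  + ptime (pv (α ν) i) (plift q t)

/-- The coefficient `B̄ ν` (formula (15) of the paper), along a curve. -/
def Bbar (α : Fin k → PhasePt (m + k) m → ℝ) (q : ℝ → Fin (m + k) → ℝ)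
    (t : ℝ) (ν : Fin k) : ℝ :=
  (∑ r : Fin m, ivel q t r *
      (pq (abar α ν) (Fin.castAdd k r) (plift q t) - pq (α ν) (Fin.castAdd k r) (plift q t)))
  + (∑ μ : Fin k, (α μ (plift q t) * pq (abar α ν) (Fin.natAdd m μ) (plift q t)
      - abar α μ (plift q t) * pq (α ν) (Fin.natAdd m μ) (plift q t)))
  + (∑ r : Fin m, iacc q t r * (pv (abar α ν) r (plift q t) - pv (α ν) r (plift q t)))
  + ptime (abar α ν) (plift q t)

/-- The full velocity vector `(q̇ ₁,…,q̇ _m, α₁,…,α_k)` obtained from a phase point. -/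
def extVel (α : Fin k → PhasePt (m + k) m → ℝ) (p : PhasePt (m + k) m) : Fin (m + k) → ℝ :=
  Fin.append p.2.1 (fun ν => α ν p)

/-- Restriction `T*` of a kinetic energy `T` by substituting `q̇ (m+ν) = α ν`. -/
def subst (α : Fin k → PhasePt (m + k) m → ℝ) (T : PhasePt (m + k) (m + k) → ℝ)
    (p : PhasePt (m + k) m) : ℝ :=
  T (p.1, extVel α p, p.2.2)

/-- `∂T/∂q̇ (m+ν)` with the dependent velocities replaced by `α₁, …, α_k`. -/
def pvT (α : Fin k → PhasePt (m + k) m → ℝ) (T : PhasePt (m + k) (m + k) → ℝ)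
    (ν : Fin k) (p : PhasePt (m + k) m) : ℝ :=
  pv T (Fin.natAdd m ν) (p.1, extVel α p, p.2.2)

/-- Partial derivative of a potential `U(q, t)` with respect to `q j`. -/
def pqU {n : ℕ} (U : (Fin n → ℝ) × ℝ → ℝ) (j : Fin n) (p : (Fin n → ℝ) × ℝ) : ℝ :=
  fderiv ℝ U p (Pi.single j 1, 0)

/-- Partial derivative of a potential `U(q, t)` with respect to time. -/
def ptU {n : ℕ} (U : (Fin n → ℝ) × ℝ → ℝ) (p : (Fin n → ℝ) × ℝ) : ℝ :=
  fderiv ℝ U p (0, 1)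

/-- The Lagrangian `L* = T* + U` in terms of the independent velocities. -/
def Lag (α : Fin k → PhasePt (m + k) m → ℝ) (T : PhasePt (m + k) (m + k) → ℝ)
    (U : (Fin (m + k) → ℝ) × ℝ → ℝ) (p : PhasePt (m + k) m) : ℝ :=
  subst α T p + U (p.1, p.2.2)

/-- The energy `∑ i q̇ i ∂L*/∂q̇ i − L*` of a function `L*` along a curve. -/
def energy (L : PhasePt (m + k) m → ℝ) (q : ℝ → Fin (m + k) → ℝ) (t : ℝ) : ℝ :=
  (∑ i : Fin m, ivel q t i * pv L i (plift q t)) - L (plift q t)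



-- ------------------------------------------------------------------
-- Auxiliary lemmas
-- ------------------------------------------------------------------

lemma pv_differentiable {n m : ℕ} {f : PhasePt n m → ℝ} (hf : ContDiff ℝ 2 f) (i : Fin m) :
    Differentiable ℝ (pv f i) := by
  have h1 : ContDiff ℝ 1 (fderiv ℝ f) := hf.fderiv_right (le_refl _)
  have h2 : ContDiff ℝ 1 (fun p => fderiv ℝ f p ((0, Pi.single i 1, 0) : PhasePt n m)) :=
    h1.clm_apply contDiff_const
  exact h2.differentiable one_ne_zero

/-- The continuous linear map `p ↦ p.2.1 i` on phase space. -/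
def coordV {n m : ℕ} (i : Fin m) : PhasePt n m →L[ℝ] ℝ :=
  (ContinuousLinearMap.proj i).comp ((ContinuousLinearMap.fst ℝ (Fin m → ℝ) ℝ).comp
    (ContinuousLinearMap.snd ℝ (Fin n → ℝ) ((Fin m → ℝ) × ℝ)))

lemma coordV_apply {n m : ℕ} (i : Fin m) (d : PhasePt n m) : coordV i d = d.2.1 i := rfl

lemma fderiv_coordV {n m : ℕ} (i : Fin m) (p : PhasePt n m) :
    fderiv ℝ (fun p : PhasePt n m => p.2.1 i) p = coordV i :=
  (coordV (n := n) i).fderiv (x := p)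

/-- The generic `ᾱ`-type sum for a single function. -/
def vbar {n m : ℕ} (f : PhasePt n m → ℝ) (p : PhasePt n m) : ℝ :=
  ∑ i : Fin m, p.2.1 i * pv f i p

lemma fderiv_vbar {n m : ℕ} {f : PhasePt n m → ℝ} (hf : ContDiff ℝ 2 f)
    (p d : PhasePt n m) :
    fderiv ℝ (vbar f) p d
      = (∑ i : Fin m, d.2.1 i * pv f i p) + ∑ i : Fin m, p.2.1 i * fderiv ℝ (pv f i) p d := by
  have hdiff := pv_differentiable hf
  have h : fderiv ℝ (vbar f) p
      = ∑ i : Fin m, fderiv ℝ (fun p : PhasePt n m => p.2.1 i * pv f i p) p := by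
    apply fderiv_fun_sum
    intro i _
    exact ((coordV (n := n) i).differentiableAt).mul ((hdiff i) p)
  have hmul : ∀ i : Fin m, fderiv ℝ (fun p : PhasePt n m => p.2.1 i * pv f i p) p
      = p.2.1 i • fderiv ℝ (pv f i) p + pv f i p • coordV i := by
    intro i
    have := fderiv_fun_mul (𝕜 := ℝ) (c := fun p : PhasePt n m => p.2.1 i) (d := pv f i)
      ((coordV (n := n) i).differentiableAt (x := p)) ((hdiff i) p)
    rw [this, fderiv_coordV]
  simp only [h, hmul, ContinuousLinearMap.sum_apply, ContinuousLinearMap.add_apply,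
    ContinuousLinearMap.smul_apply, coordV_apply, smul_eq_mul, Finset.sum_add_distrib]
  rw [add_comm]
  congr 1
  exact Finset.sum_congr rfl fun i _ => mul_comm _ _

lemma alg_identity (m k : ℕ) (V a Dq Dt Dvr : Fin m → ℝ) (Dqv Dvv : Fin m → Fin m → ℝ)
    (Dqm : Fin m → Fin k → ℝ) (Dv : Fin k → Fin m → ℝ) (Dq' A : Fin k → ℝ) :
    ∑ i : Fin m, ((∑ r : Fin m, (Dqv i r * V r + Dvv i r * a r)) - Dq i
        + (∑ μ : Fin k, (Dqm i μ * A μ - Dv μ i * Dq' μ)) + Dt i) * V i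
      = (∑ r : Fin m, V r * ((∑ i : Fin m, V i * Dqv i r) - Dq r))
        + (∑ μ : Fin k, (A μ * (∑ i : Fin m, V i * Dqm i μ)
            - (∑ i : Fin m, V i * Dv μ i) * Dq' μ))
        + (∑ r : Fin m, a r * ((Dvr r + ∑ i : Fin m, V i * Dvv i r) - Dvr r))
        + ∑ i : Fin m, V i * Dt i := by
  simp only [add_sub_cancel_left, add_mul, sub_mul, Finset.sum_mul, Finset.mul_sum, mul_sub,
    Finset.sum_add_distrib, Finset.sum_sub_distrib]
  rw [Finset.sum_comm (f := fun i r => (Dqv i r * V r) * V i),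
    Finset.sum_comm (f := fun i r => (Dvv i r * a r) * V i),
    Finset.sum_comm (f := fun i μ => (Dqm i μ * A μ) * V i),
    Finset.sum_comm (f := fun i μ => (Dv μ i * Dq' μ) * V i)]
  have c2 : ∀ {n : ℕ} (f g : Fin n → Fin m → ℝ), (∀ x y, f x y = g x y) →
      (∑ x : Fin n, ∑ y : Fin m, f x y) = ∑ x : Fin n, ∑ y : Fin m, g x y :=
    fun f g h => Finset.sum_congr rfl fun x _ => Finset.sum_congr rfl fun y _ => h x y
  have c1 : ∀ (f g : Fin m → ℝ), (∀ x, f x = g x) → (∑ x : Fin m, f x) = ∑ x : Fin m, g x :=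
    fun f g h => Finset.sum_congr rfl fun x _ => h x
  rw [c2 (fun r i => Dqv i r * V r * V i) (fun r i => V r * (V i * Dqv i r)) (by intros; ring),
    c2 (fun r i => Dvv i r * a r * V i) (fun r i => a r * (V i * Dvv i r)) (by intros; ring),
    c2 (fun μ i => Dqm i μ * A μ * V i) (fun μ i => A μ * (V i * Dqm i μ)) (by intros; ring),
    c2 (fun μ i => Dv μ i * Dq' μ * V i) (fun μ i => V i * Dv μ i * Dq' μ) (by intros; ring),
    c1 (fun i => Dq i * V i) (fun i => V i * Dq i) (by intros; ring),
    c1 (fun i => Dt i * V i) (fun i => V i * Dt i) (by intros; ring)]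
  simp only [← Finset.mul_sum, ← Finset.sum_mul]
  ring

/-- Along every admissible `C²` curve, `∑ i B i ν q̇ i = B̄ ν`
(the intermediate identity (19) in the proof of the energy balance). -/
theorem sum_Bcoef_mul_vel_eq_Bbar
    (m k : ℕ) (hm : 1 ≤ m) (hk : 1 ≤ k)
    (α : Fin k → PhasePt (m + k) m → ℝ) (hα : ∀ ν, ContDiff ℝ 2 (α ν))
    (q : ℝ → Fin (m + k) → ℝ) (hq : ContDiff ℝ 2 q)
    (hadm : Admissible α q) :
    ∀ (t : ℝ) (ν : Fin k),
      ∑ i : Fin m, Bcoef α q t ν i * ivel q t i = Bbar α q t ν := by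
  intro t ν
  classical
  set p := plift q t with hp
  have habarfun : ∀ μ : Fin k, abar α μ = vbar (α μ) := fun μ => rfl
  have key : ∀ (μ : Fin k) (d : PhasePt (m + k) m), fderiv ℝ (abar α μ) p d
      = (∑ i : Fin m, d.2.1 i * pv (α μ) i p)
        + ∑ i : Fin m, p.2.1 i * fderiv ℝ (pv (α μ) i) p d := by
    intro μ d
    rw [habarfun μ]
    exact fderiv_vbar (hα μ) p d
  have h1 : ∀ (μ : Fin k) (j : Fin (m + k)),
      pq (abar α μ) j p = ∑ i : Fin m, p.2.1 i * pq (pv (α μ) i) j p := by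
    intro μ j
    have h := key μ (Pi.single j 1, 0, 0)
    simpa [pq] using h
  have h2 : ∀ r : Fin m, pv (abar α ν) r p
      = pv (α ν) r p + ∑ i : Fin m, p.2.1 i * pv (pv (α ν) i) r p := by
    intro r
    have h := key ν (0, Pi.single r 1, 0)
    rw [pv, h]
    congr 1
    simp [Pi.single_apply]
  have h3 : ptime (abar α ν) p = ∑ i : Fin m, p.2.1 i * ptime (pv (α ν) i) p := by
    have h := key ν (0, 0, 1)
    simpa [ptime] using h
  have habarp : ∀ μ : Fin k, abar α μ p = ∑ i : Fin m, p.2.1 i * pv (α μ) i p := fun μ => rfl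
  have hv : ivel q t = p.2.1 := rfl
  simp only [Bcoef, Bbar, ← hp, hv, h1, h2, h3, habarp]
  exact alg_identity m k (p.2.1) (iacc q t)
    (fun i => pq (α ν) (Fin.castAdd k i) p) (fun i => ptime (pv (α ν) i) p)
    (fun r => pv (α ν) r p)
    (fun i r => pq (pv (α ν) i) (Fin.castAdd k r) p)
    (fun i r => pv (pv (α ν) i) r p)
    (fun i μ => pq (pv (α ν) i) (Fin.natAdd m μ) p)
    (fun μ i => pv (α μ) i p)
    (fun μ => pq (α ν) (Fin.natAdd m μ) p)
    (fun μ => α μ p)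


end
end

section
/- Let m, k ≥ 1, n = m + k. Let α_ν : ℝⁿ × ℝᵐ × ℝ → ℝ (ν = 1,…,k) be C² functions of (q₁,…,qₙ, q̇₁,…,q̇_m, t); set ᾱ_ν := Σ_{i=1}^m q̇_i ∂α_ν/∂q̇_i, and define B_i^ν and B̄_ν as in the Voronec-type formalism, namely B_i^ν := Σ_{r=1}^m (∂²α_ν/(∂q̇_i∂q_r) q̇_r + ∂²α_ν/(∂q̇_i∂q̇_r) q̈_r) − ∂α_ν/∂q_i + Σ_{μ=1}^k (∂²α_ν/(∂q̇_i∂q_{m+μ}) α_μ − (∂α_μ/∂q̇_i)(∂α_ν/∂q_{m+μ})) + ∂²α_ν/(∂q̇_i∂t), and B̄_ν := Σ_{r=1}^m q̇_r (∂ᾱ_ν/∂q_r − ∂α_ν/∂q_r) + Σ_{μ=1}^k (α_μ ∂ᾱ_ν/∂q_{m+μ} − ᾱ_μ ∂α_ν/∂q_{m+μ}) + Σ_{r=1}^m q̈_r (∂ᾱ_ν/∂q̇_r − ∂α_ν/∂q̇_r) + ∂ᾱ_ν/∂t. Let T : ℝⁿ × ℝⁿ × ℝ → ℝ be a C² kinetic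 energy, define T*(q₁,…,qₙ, q̇₁,…,q̇_m, t) := T(q₁,…,qₙ, q̇₁,…,q̇_m, α₁,…,α_k, t), let U : ℝⁿ × ℝ → ℝ be a C² potential, and set L* := T* + U. Suppose q(t) is a C² admissible curve (q̇_{m+ν} = α_ν along the curve) satisfying the equations of motion: for each i = 1,…,m, d/dt(∂T*/∂q̇_i) − ∂T*/∂q_i − Σ_{ν=1}^k (∂T*/∂q_{m+ν})(∂α_ν/∂q̇_i) − Σ_{ν=1}^k B_i^ν ∂T/∂q̇_{m+ν} = ∂U/∂q_i + Σ_{ν=1}^k (∂α_ν/∂q̇_i)(∂U/∂q_{m+ν}), where in ∂T/∂q̇_{m+ν} the dependent velocities are replaced by α₁,…,α_k. Then along the curve: d/dt( Σ_{i=1}^m q̇_i ∂L*/∂q̇_i − L* ) − Σ_{ν=1}^k (ᾱ_ν − α_ν) ∂L*/∂q_{m+ν} − Σ_{ν=1}^k B̄_ν ∂T/∂q̇_{m+ν} = − ∂L*/∂t. -/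
open scoped BigOperators

noncomputable section

variable {m k : ℕ}

section Helpers

variable {m k : ℕ}

lemma clm_expand (D : PhasePt (m+k) m →L[ℝ] ℝ) (a : Fin (m+k) → ℝ) (b : Fin m → ℝ) (c : ℝ) :
    D (a, b, c) = (∑ j, a j * D (Pi.single j 1, 0, 0)) + (∑ r, b r * D (0, Pi.single r 1, 0))
      + c * D (0, 0, 1) := by
  have hsplit : (a, b, c) = ((a, 0, 0) : PhasePt (m+k) m) + (0, b, 0) + (0, 0, c) := by
    simp [Prod.ext_iff]
  rw [hsplit, map_add, map_add]
  let Da : (Fin (m+k) → ℝ) →L[ℝ] ℝ := D.comp (ContinuousLinearMap.inl ℝ _ _)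
  let Db : (Fin m → ℝ) →L[ℝ] ℝ :=
    D.comp ((ContinuousLinearMap.inr ℝ _ _).comp (ContinuousLinearMap.inl ℝ _ _))
  have h1 : D ((a, 0, 0) : PhasePt (m+k) m) = ∑ j, a j * D (Pi.single j 1, 0, 0) := by
    have : ∀ x : Fin (m+k) → ℝ, D ((x, 0, 0) : PhasePt (m+k) m) = Da x := fun _ => rfl
    rw [this, ← Finset.univ_sum_single a]
    rw [map_sum]
    refine Finset.sum_congr rfl fun j _ => ?_
    rw [← this]
    have : (Pi.single j (a j) : Fin (m+k) → ℝ) = a j • (Pi.single j (1:ℝ) : Fin (m+k) → ℝ) := by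
      rw [← Pi.single_smul, smul_eq_mul, mul_one]
    rw [this]
    have := D.map_smul (a j) ((Pi.single j (1:ℝ) : Fin (m+k) → ℝ), (0 : Fin m → ℝ), (0:ℝ))
    simpa [Prod.smul_mk, smul_eq_mul] using this
  have h2 : D ((0, b, 0) : PhasePt (m+k) m) = ∑ r, b r * D (0, Pi.single r 1, 0) := by
    have heq : ∀ x : Fin m → ℝ, D ((0, x, 0) : PhasePt (m+k) m) = Db x := fun _ => rfl
    rw [heq, ← Finset.univ_sum_single b, map_sum]
    refine Finset.sum_congr rfl fun r _ => ?_
    rw [← heq]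
    have h : (Pi.single r (b r) : Fin m → ℝ) = b r • (Pi.single r (1:ℝ) : Fin m → ℝ) := by
      rw [← Pi.single_smul, smul_eq_mul, mul_one]
    rw [h]
    have := D.map_smul (b r) ((0 : Fin (m+k) → ℝ), (Pi.single r (1:ℝ) : Fin m → ℝ), (0:ℝ))
    simpa [Prod.smul_mk, smul_eq_mul] using this
  have h3 : D ((0, 0, c) : PhasePt (m+k) m) = c * D (0, 0, 1) := by
    have : ((0, 0, c) : PhasePt (m+k) m) = c • ((0,0,1) : PhasePt (m+k) m) := by
      simp [Prod.smul_mk]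
    rw [this]
    have := D.map_smul c (((0:Fin (m+k) → ℝ), (0 : Fin m → ℝ), (1:ℝ)) : PhasePt (m+k) m)
    simpa [smul_eq_mul] using this
  rw [h1, h2, h3]

lemma contDiff_deriv_of_two {q : ℝ → Fin (m+k) → ℝ} (hq : ContDiff ℝ 2 q) :
    ContDiff ℝ 1 (deriv q) := by
  have := (contDiff_succ_iff_deriv (n := 1)).mp (by exact_mod_cast hq)
  exact this.2.2

lemma hasDerivAt_ivel {q : ℝ → Fin (m+k) → ℝ} (hq : ContDiff ℝ 2 q) (t : ℝ) :
    HasDerivAt (ivel q) (iacc q t) t := by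
  have hd : HasDerivAt (deriv q) (deriv (deriv q) t) t :=
    (((contDiff_deriv_of_two hq).differentiable one_ne_zero) t).hasDerivAt
  let L : (Fin (m+k) → ℝ) →L[ℝ] (Fin m → ℝ) :=
    ContinuousLinearMap.pi (fun i => ContinuousLinearMap.proj (Fin.castAdd k i))
  exact L.hasFDerivAt.comp_hasDerivAt t hd

lemma hasDerivAt_plift {q : ℝ → Fin (m+k) → ℝ} (hq : ContDiff ℝ 2 q) (t : ℝ) :
    HasDerivAt (plift q) (deriv q t, iacc q t, 1) t := by
  have h1 : HasDerivAt q (deriv q t) t :=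
    ((hq.differentiable (by norm_num)) t).hasDerivAt
  exact h1.prodMk ((hasDerivAt_ivel hq t).prodMk (hasDerivAt_id t))

/-- Chain rule along the lifted curve. -/
lemma deriv_comp_plift {q : ℝ → Fin (m+k) → ℝ} (hq : ContDiff ℝ 2 q)
    {α : Fin k → PhasePt (m + k) m → ℝ} (hadm : Admissible α q)
    {f : PhasePt (m+k) m → ℝ} {t : ℝ} (hf : DifferentiableAt ℝ f (plift q t)) :
    deriv (fun s => f (plift q s)) t
      = (∑ i : Fin m, ivel q t i * pq f (Fin.castAdd k i) (plift q t))
      + (∑ ν : Fin k, α ν (plift q t) * pq f (Fin.natAdd m ν) (plift q t))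
      + (∑ r : Fin m, iacc q t r * pv f r (plift q t))
      + ptime f (plift q t) := by
  have h := (hf.hasFDerivAt.comp_hasDerivAt t (hasDerivAt_plift hq t)).deriv
  have h2 : deriv (fun s => f (plift q s)) t
      = fderiv ℝ f (plift q t) (deriv q t, iacc q t, 1) := h
  rw [h2, clm_expand, Fin.sum_univ_add]
  simp only [pq, pv, ptime, one_mul]
  have hc : ∀ i : Fin m, deriv q t (Fin.castAdd k i) = ivel q t i := fun _ => rfl
  have hn : ∀ ν : Fin k, deriv q t (Fin.natAdd m ν) = α ν (plift q t) := fun ν => hadm t ν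
  simp only [hc, hn]

lemma contDiff_extVel {α : Fin k → PhasePt (m + k) m → ℝ} (hα : ∀ ν, ContDiff ℝ 2 (α ν)) :
    ContDiff ℝ 2 (extVel α) := by
  rw [contDiff_pi]
  intro j
  refine Fin.addCases (fun i => ?_) (fun ν => ?_) j
  · have he : (fun p : PhasePt (m+k) m => extVel α p (Fin.castAdd k i))
        = fun p => p.2.1 i := by
      funext p; exact Fin.append_left _ _ i
    rw [he]
    exact (contDiff_pi.mp (contDiff_fst.comp contDiff_snd)) i
  · have he : (fun p : PhasePt (m+k) m => extVel α p (Fin.natAdd m ν)) = α ν := by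
      funext p; exact Fin.append_right _ _ ν
    rw [he]; exact hα ν

lemma contDiff_subst {α : Fin k → PhasePt (m + k) m → ℝ} (hα : ∀ ν, ContDiff ℝ 2 (α ν))
    {T : PhasePt (m + k) (m + k) → ℝ} (hT : ContDiff ℝ 2 T) :
    ContDiff ℝ 2 (subst α T) :=
  hT.comp (contDiff_fst.prodMk ((contDiff_extVel hα).prodMk (contDiff_snd.comp contDiff_snd)))

lemma contDiff_Uq {U : (Fin (m + k) → ℝ) × ℝ → ℝ} (hU : ContDiff ℝ 2 U) :
    ContDiff ℝ 2 (fun p : PhasePt (m+k) m => U (p.1, p.2.2)) :=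
  hU.comp (contDiff_fst.prodMk (contDiff_snd.comp contDiff_snd))

lemma contDiff_Lag {α : Fin k → PhasePt (m + k) m → ℝ} (hα : ∀ ν, ContDiff ℝ 2 (α ν))
    {T : PhasePt (m + k) (m + k) → ℝ} (hT : ContDiff ℝ 2 T)
    {U : (Fin (m + k) → ℝ) × ℝ → ℝ} (hU : ContDiff ℝ 2 U) :
    ContDiff ℝ 2 (Lag α T U) :=
  (contDiff_subst hα hT).add (contDiff_Uq hU)

/-- Directional derivative of a `C²` function is `C¹`. -/
lemma contDiff_dirDeriv {f : PhasePt (m+k) m → ℝ} (hf : ContDiff ℝ 2 f)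
    (w : PhasePt (m+k) m) : ContDiff ℝ 1 (fun p => fderiv ℝ f p w) :=
  (hf.fderiv_right (by norm_num)).clm_apply contDiff_const

/-- `fderiv` of the Lagrangian splits into the `T*` part and the `U` part. -/
lemma fderiv_Lag {α : Fin k → PhasePt (m + k) m → ℝ} (hα : ∀ ν, ContDiff ℝ 2 (α ν))
    {T : PhasePt (m + k) (m + k) → ℝ} (hT : ContDiff ℝ 2 T)
    {U : (Fin (m + k) → ℝ) × ℝ → ℝ} (hU : ContDiff ℝ 2 U)
    (p : PhasePt (m+k) m) (w : PhasePt (m+k) m) :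
    fderiv ℝ (Lag α T U) p w
      = fderiv ℝ (subst α T) p w + fderiv ℝ U (p.1, p.2.2) (w.1, w.2.2) := by
  let G : PhasePt (m+k) m →L[ℝ] (Fin (m + k) → ℝ) × ℝ :=
    (ContinuousLinearMap.fst ℝ _ _).prod
      ((ContinuousLinearMap.snd ℝ _ _).comp (ContinuousLinearMap.snd ℝ _ _))
  have hG : ∀ p : PhasePt (m+k) m, G p = (p.1, p.2.2) := fun _ => rfl
  have h2 : HasFDerivAt (fun p : PhasePt (m+k) m => U (p.1, p.2.2))
      ((fderiv ℝ U (p.1, p.2.2)).comp G) p := by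
    have := ((hU.differentiable two_ne_zero (p.1, p.2.2)).hasFDerivAt).comp p G.hasFDerivAt
    exact this
  have h1 : DifferentiableAt ℝ (subst α T) p :=
    ((contDiff_subst hα hT).differentiable two_ne_zero) p
  have : fderiv ℝ (Lag α T U) p = fderiv ℝ (subst α T) p + (fderiv ℝ U (p.1, p.2.2)).comp G := by
    have := fderiv_add h1 h2.differentiableAt (𝕜 := ℝ)
      (f := subst α T) (g := fun p : PhasePt (m+k) m => U (p.1, p.2.2)) (x := p)
    rw [h2.fderiv] at this
    exact this
  rw [show Lag α T U = fun p => subst α T p + U (p.1, p.2.2) from rfl] at *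
  rw [this]
  rfl
lemma pq_Lag {α : Fin k → PhasePt (m + k) m → ℝ} (hα : ∀ ν, ContDiff ℝ 2 (α ν))
    {T : PhasePt (m + k) (m + k) → ℝ} (hT : ContDiff ℝ 2 T)
    {U : (Fin (m + k) → ℝ) × ℝ → ℝ} (hU : ContDiff ℝ 2 U)
    (p : PhasePt (m+k) m) (j : Fin (m+k)) :
    pq (Lag α T U) j p = pq (subst α T) j p + pqU U j (p.1, p.2.2) := by
  have := fderiv_Lag hα hT hU p (Pi.single j 1, 0, 0)
  simpa [pq, pqU] using this

lemma pv_Lag {α : Fin k → PhasePt (m + k) m → ℝ} (hα : ∀ ν, ContDiff ℝ 2 (α ν))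
    {T : PhasePt (m + k) (m + k) → ℝ} (hT : ContDiff ℝ 2 T)
    {U : (Fin (m + k) → ℝ) × ℝ → ℝ} (hU : ContDiff ℝ 2 U)
    (p : PhasePt (m+k) m) (r : Fin m) :
    pv (Lag α T U) r p = pv (subst α T) r p := by
  have := fderiv_Lag hα hT hU p (0, Pi.single r 1, 0)
  simpa [pv, show ((0 : Fin (m+k) → ℝ), (0:ℝ)) = 0 from rfl] using this

lemma ptime_Lag {α : Fin k → PhasePt (m + k) m → ℝ} (hα : ∀ ν, ContDiff ℝ 2 (α ν))
    {T : PhasePt (m + k) (m + k) → ℝ} (hT : ContDiff ℝ 2 T)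
    {U : (Fin (m + k) → ℝ) × ℝ → ℝ} (hU : ContDiff ℝ 2 U)
    (p : PhasePt (m+k) m) :
    ptime (Lag α T U) p = ptime (subst α T) p + ptU U (p.1, p.2.2) := by
  have := fderiv_Lag hα hT hU p (0, 0, 1)
  simpa [ptime, ptU] using this

/-- Directional derivative of `ᾱ ν = ∑ i v i ∂α ν/∂v i`. -/
lemma fderiv_abar {α : Fin k → PhasePt (m + k) m → ℝ} (hα : ∀ ν, ContDiff ℝ 2 (α ν))
    (ν : Fin k) (p : PhasePt (m+k) m) (w : PhasePt (m+k) m) :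
    fderiv ℝ (abar α ν) p w
      = ∑ i : Fin m, (w.2.1 i * pv (α ν) i p + p.2.1 i * fderiv ℝ (pv (α ν) i) p w) := by
  let E : Fin m → (PhasePt (m+k) m →L[ℝ] ℝ) := fun i =>
    (ContinuousLinearMap.proj i).comp
      ((ContinuousLinearMap.fst ℝ _ _).comp (ContinuousLinearMap.snd ℝ _ _))
  have hE : ∀ (i : Fin m) (w : PhasePt (m+k) m), E i w = w.2.1 i := fun _ _ => rfl
  have hterm : ∀ i : Fin m, HasFDerivAt (fun p : PhasePt (m+k) m => p.2.1 i * pv (α ν) i p)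
      (p.2.1 i • fderiv ℝ (pv (α ν) i) p + pv (α ν) i p • E i) p := by
    intro i
    have hg : HasFDerivAt (pv (α ν) i) (fderiv ℝ (pv (α ν) i) p) p :=
      (((contDiff_dirDeriv (hα ν) (0, Pi.single i 1, 0)).differentiable one_ne_zero) p).hasFDerivAt
    exact (E i).hasFDerivAt.mul hg
  have hsum : HasFDerivAt (abar α ν)
      (∑ i : Fin m, (p.2.1 i • fderiv ℝ (pv (α ν) i) p + pv (α ν) i p • E i)) p := by
    have := HasFDerivAt.fun_sum (fun i (_ : i ∈ Finset.univ) => hterm i)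
    exact this
  rw [hsum.fderiv]
  simp only [ContinuousLinearMap.sum_apply, ContinuousLinearMap.add_apply,
    ContinuousLinearMap.smul_apply, smul_eq_mul, hE]
  refine Finset.sum_congr rfl fun i _ => by ring
lemma pq_abar {α : Fin k → PhasePt (m + k) m → ℝ} (hα : ∀ ν, ContDiff ℝ 2 (α ν))
    (ν : Fin k) (p : PhasePt (m+k) m) (j : Fin (m+k)) :
    pq (abar α ν) j p = ∑ i : Fin m, p.2.1 i * pq (pv (α ν) i) j p := by
  have := fderiv_abar hα ν p (Pi.single j 1, 0, 0)
  simpa [pq] using this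

lemma ptime_abar {α : Fin k → PhasePt (m + k) m → ℝ} (hα : ∀ ν, ContDiff ℝ 2 (α ν))
    (ν : Fin k) (p : PhasePt (m+k) m) :
    ptime (abar α ν) p = ∑ i : Fin m, p.2.1 i * ptime (pv (α ν) i) p := by
  have := fderiv_abar hα ν p (0, 0, 1)
  simpa [ptime] using this

lemma pv_abar {α : Fin k → PhasePt (m + k) m → ℝ} (hα : ∀ ν, ContDiff ℝ 2 (α ν))
    (ν : Fin k) (p : PhasePt (m+k) m) (r : Fin m) :
    pv (abar α ν) r p = pv (α ν) r p + ∑ i : Fin m, p.2.1 i * pv (pv (α ν) i) r p := by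
  have h := fderiv_abar hα ν p (0, Pi.single r 1, 0)
  have h2 : ∑ i : Fin m, ((0, Pi.single r 1, 0) : PhasePt (m+k) m).2.1 i * pv (α ν) i p
      = pv (α ν) r p := by
    simp [Pi.single_apply, ite_mul]
  rw [show pv (abar α ν) r p = fderiv ℝ (abar α ν) p (0, Pi.single r 1, 0) from rfl, h,
    Finset.sum_add_distrib, h2]
  rfl

lemma Bbar_eq_sum {α : Fin k → PhasePt (m + k) m → ℝ} (hα : ∀ ν, ContDiff ℝ 2 (α ν))
    (q : ℝ → Fin (m + k) → ℝ) (t : ℝ) (ν : Fin k) :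
    Bbar α q t ν = ∑ i : Fin m, ivel q t i * Bcoef α q t ν i := by
  have h21 : (plift q t).2.1 = ivel q t := rfl
  have habar : ∀ μ, abar α μ (plift q t) = ∑ i : Fin m, ivel q t i * pv (α μ) i (plift q t) :=
    fun μ => rfl
  simp only [Bbar, Bcoef, pq_abar hα, pv_abar hα, ptime_abar hα, habar, h21]
  simp only [mul_add, mul_sub, add_mul, sub_mul, Finset.mul_sum, Finset.sum_mul,
    Finset.sum_add_distrib, Finset.sum_sub_distrib]
  have e1 : ∑ x : Fin m, ∑ i : Fin m,
        ivel q t x * (ivel q t i * pq (pv (α ν) i) (Fin.castAdd k x) (plift q t))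
      = ∑ x : Fin m, ∑ i : Fin m,
        ivel q t x * (pq (pv (α ν) x) (Fin.castAdd k i) (plift q t) * ivel q t i) := by
    rw [Finset.sum_comm]
    exact Finset.sum_congr rfl fun x _ => Finset.sum_congr rfl fun i _ => by ring
  have e2 : ∑ x : Fin k, ∑ i : Fin m,
        α x (plift q t) * (ivel q t i * pq (pv (α ν) i) (Fin.natAdd m x) (plift q t))
      = ∑ x : Fin m, ∑ i : Fin k,
        ivel q t x * (pq (pv (α ν) x) (Fin.natAdd m i) (plift q t) * α i (plift q t)) := by
    rw [Finset.sum_comm]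
    exact Finset.sum_congr rfl fun x _ => Finset.sum_congr rfl fun i _ => by ring
  have e3 : ∑ x : Fin k, ∑ i : Fin m,
        ivel q t i * pv (α x) i (plift q t) * pq (α ν) (Fin.natAdd m x) (plift q t)
      = ∑ x : Fin m, ∑ i : Fin k,
        ivel q t x * (pv (α i) x (plift q t) * pq (α ν) (Fin.natAdd m i) (plift q t)) := by
    rw [Finset.sum_comm]
    exact Finset.sum_congr rfl fun x _ => Finset.sum_congr rfl fun i _ => by ring
  have e4 : ∑ x : Fin m, ∑ i : Fin m,
        iacc q t x * (ivel q t i * pv (pv (α ν) i) x (plift q t))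
      = ∑ x : Fin m, ∑ i : Fin m,
        ivel q t x * (pv (pv (α ν) x) i (plift q t) * iacc q t i) := by
    rw [Finset.sum_comm]
    exact Finset.sum_congr rfl fun x _ => Finset.sum_congr rfl fun i _ => by ring
  rw [e1, e2, e3, e4]
  ring
end Helpers
/-- Proposition 2 of the paper: energy balance (13).  Along every
admissible `C²` solution of the Voronec-type equations of motion with potential forces,
`d/dt(∑ i q̇ i ∂L*/∂q̇ i − L*) − ∑ ν (ᾱ ν − α ν) ∂L*/∂q (m+ν) − ∑ ν B̄ ν ∂T/∂q̇ (m+ν)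
  = − ∂L*/∂t`, where `L* = T* + U`. -/
theorem energy_balance
    (m k : ℕ) (hm : 1 ≤ m) (hk : 1 ≤ k)
    (α : Fin k → PhasePt (m + k) m → ℝ) (hα : ∀ ν, ContDiff ℝ 2 (α ν))
    (T : PhasePt (m + k) (m + k) → ℝ) (hT : ContDiff ℝ 2 T)
    (U : (Fin (m + k) → ℝ) × ℝ → ℝ) (hU : ContDiff ℝ 2 U)
    (q : ℝ → Fin (m + k) → ℝ) (hq : ContDiff ℝ 2 q)
    (hadm : Admissible α q)
    (heom : ∀ (t : ℝ) (i : Fin m),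
      deriv (fun s => pv (subst α T) i (plift q s)) t
        - pq (subst α T) (Fin.castAdd k i) (plift q t)
        - (∑ ν : Fin k, pq (subst α T) (Fin.natAdd m ν) (plift q t) * pv (α ν) i (plift q t))
        - (∑ ν : Fin k, Bcoef α q t ν i * pvT α T ν (plift q t)) =
      pqU U (Fin.castAdd k i) (q t, t)
        + ∑ ν : Fin k, pv (α ν) i (plift q t) * pqU U (Fin.natAdd m ν) (q t, t)) :
    ∀ t : ℝ,
      deriv (fun s => energy (Lag α T U) q s) t
        - (∑ ν : Fin k, (abar α ν (plift q t) - α ν (plift q t))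
            * pq (Lag α T U) (Fin.natAdd m ν) (plift q t))
        - (∑ ν : Fin k, Bbar α q t ν * pvT α T ν (plift q t)) =
      - ptime (Lag α T U) (plift q t) := by
  intro t
  have hT2 : ContDiff ℝ 2 (subst α T) := contDiff_subst hα hT
  have hL2 : ContDiff ℝ 2 (Lag α T U) := contDiff_Lag hα hT hU
  -- the energy written with `T*` in place of `L*` in the velocity derivatives
  have hEE : energy (Lag α T U) q = fun s =>
      (∑ i : Fin m, ivel q s i * pv (subst α T) i (plift q s)) - Lag α T U (plift q s) := by
    funext s
    simp only [energy, pv_Lag hα hT hU]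
  -- derivative of the velocity functions
  have hivel : ∀ (i : Fin m), HasDerivAt (fun s => ivel q s i) (iacc q t i) t := by
    intro i
    exact (ContinuousLinearMap.proj (R := ℝ) (φ := fun _ : Fin m => ℝ) i).hasFDerivAt.comp_hasDerivAt
      t (hasDerivAt_ivel hq t)
  -- differentiability of s ↦ ∂T*/∂q̇ i (plift q s)
  have hg : ∀ (i : Fin m), HasDerivAt (fun s => pv (subst α T) i (plift q s))
      (deriv (fun s => pv (subst α T) i (plift q s)) t) t := by
    intro i
    have h1 : DifferentiableAt ℝ (fun p => fderiv ℝ (subst α T) p (0, Pi.single i 1, 0))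
        (plift q t) := ((contDiff_dirDeriv hT2 (0, Pi.single i 1, 0)).differentiable one_ne_zero) _
    have := h1.comp t (hasDerivAt_plift hq t).differentiableAt
    exact this.hasDerivAt
  -- total derivative of the energy
  have hE : HasDerivAt (fun s => energy (Lag α T U) q s)
      ((∑ i : Fin m, (iacc q t i * pv (subst α T) i (plift q t)
          + ivel q t i * deriv (fun s => pv (subst α T) i (plift q s)) t))
        - deriv (fun s => Lag α T U (plift q s)) t) t := by
    rw [hEE]
    have hsum : HasDerivAt (fun s => ∑ i : Fin m, ivel q s i * pv (subst α T) i (plift q s))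
        (∑ i : Fin m, (iacc q t i * pv (subst α T) i (plift q t)
          + ivel q t i * deriv (fun s => pv (subst α T) i (plift q s)) t)) t := by
      refine HasDerivAt.fun_sum fun i _ => ?_
      exact (hivel i).mul (hg i)
    have hlag : HasDerivAt (fun s => Lag α T U (plift q s))
        (deriv (fun s => Lag α T U (plift q s)) t) t := by
      have := ((hL2.differentiable two_ne_zero) (plift q t)).comp t
        (hasDerivAt_plift hq t).differentiableAt
      exact this.hasDerivAt
    exact hsum.sub hlag
  rw [hE.deriv]
  -- chain rule for the Lagrangian along the curve
  have hlagd : deriv (fun s => Lag α T U (plift q s)) t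
      = (∑ i : Fin m, ivel q t i * pq (Lag α T U) (Fin.castAdd k i) (plift q t))
      + (∑ ν : Fin k, α ν (plift q t) * pq (Lag α T U) (Fin.natAdd m ν) (plift q t))
      + (∑ r : Fin m, iacc q t r * pv (subst α T) r (plift q t))
      + ptime (Lag α T U) (plift q t) := by
    rw [deriv_comp_plift hq hadm ((hL2.differentiable two_ne_zero) (plift q t))]
    simp only [pv_Lag hα hT hU]
  -- the equations of motion, rewritten with `L*`
  have hgd : ∀ i : Fin m, deriv (fun s => pv (subst α T) i (plift q s)) t
      = pq (Lag α T U) (Fin.castAdd k i) (plift q t)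
      + (∑ ν : Fin k, pv (α ν) i (plift q t) * pq (Lag α T U) (Fin.natAdd m ν) (plift q t))
      + (∑ ν : Fin k, Bcoef α q t ν i * pvT α T ν (plift q t)) := by
    intro i
    have h0 := heom t i
    have hq1 : pqU U (Fin.castAdd k i) (q t, t)
        = pq (Lag α T U) (Fin.castAdd k i) (plift q t)
          - pq (subst α T) (Fin.castAdd k i) (plift q t) := by
      rw [pq_Lag hα hT hU,
        show ((plift q t).1, (plift q t).2.2) = (q t, t) from rfl]; ring
    have hq2 : ∀ ν : Fin k, pq (subst α T) (Fin.natAdd m ν) (plift q t) * pv (α ν) i (plift q t)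
        + pv (α ν) i (plift q t) * pqU U (Fin.natAdd m ν) (q t, t)
        = pv (α ν) i (plift q t) * pq (Lag α T U) (Fin.natAdd m ν) (plift q t) := by
      intro ν; rw [pq_Lag hα hT hU,
        show ((plift q t).1, (plift q t).2.2) = (q t, t) from rfl]; ring
    have hsum2 : ∑ ν : Fin k, pq (subst α T) (Fin.natAdd m ν) (plift q t) * pv (α ν) i (plift q t)
        + ∑ ν : Fin k, pv (α ν) i (plift q t) * pqU U (Fin.natAdd m ν) (q t, t)
        = ∑ ν : Fin k, pv (α ν) i (plift q t) * pq (Lag α T U) (Fin.natAdd m ν) (plift q t) := by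
      rw [← Finset.sum_add_distrib]
      exact Finset.sum_congr rfl fun ν _ => hq2 ν
    rw [hq1] at h0
    linarith [hsum2]
  rw [hlagd]
  simp only [hgd]
  simp only [Bbar_eq_sum hα]
  have habar : ∀ μ, abar α μ (plift q t) = ∑ i : Fin m, ivel q t i * pv (α μ) i (plift q t) :=
    fun μ => rfl
  simp only [habar]
  simp only [mul_add, Finset.mul_sum, sub_mul, Finset.sum_mul, Finset.sum_add_distrib,
    Finset.sum_sub_distrib]
  have w1 : ∑ x : Fin m, ∑ i : Fin k,
        ivel q t x * (pv (α i) x (plift q t) * pq (Lag α T U) (Fin.natAdd m i) (plift q t))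
      = ∑ x : Fin k, ∑ i : Fin m,
        ivel q t i * pv (α x) i (plift q t) * pq (Lag α T U) (Fin.natAdd m x) (plift q t) := by
    rw [Finset.sum_comm]
    exact Finset.sum_congr rfl fun x _ => Finset.sum_congr rfl fun i _ => by ring
  have w2 : ∑ x : Fin m, ∑ i : Fin k,
        ivel q t x * (Bcoef α q t i x * pvT α T i (plift q t))
      = ∑ x : Fin k, ∑ i : Fin m,
        ivel q t i * Bcoef α q t x i * pvT α T x (plift q t) := by
    rw [Finset.sum_comm]
    exact Finset.sum_congr rfl fun x _ => Finset.sum_congr rfl fun i _ => by ring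
  rw [w1, w2]
  ring

end
end

section
/- Let m, k ≥ 1, n = m + k. Suppose the constraint functions, the kinetic energy and the potential do not depend on the coordinates q_{m+1},…,qₙ, i.e. α_ν = α_ν(q₁,…,q_m, q̇₁,…,q̇_m, t) are C², T = T(q₁,…,q_m, q̇₁,…,q̇ₙ, t) is C², and U = U(q₁,…,q_m, t) is C² (a nonlinear Čaplygin system with forces deriving from the potential U). Set ᾱ_ν := Σ_{i=1}^m q̇_i ∂α_ν/∂q̇_i, T*(q₁,…,q_m, q̇₁,…,q̇_m, t) := T(q₁,…,q_m, q̇₁,…,q̇_m, α₁,…,α_k, t), L* := T* + U, and define B_i^ν as in the Voronec-type formalism. Then along every C² admissible curve q(t) (q̇_{m+ν} = α_ν along the curve) satisfying the equations of motion d/dt(∂T*/∂q̇_i) − ∂T*/∂q_i − Σ_{ν=1}^k B_i^ν ∂T/∂q̇_{m+ν} = ∂U/∂q_i for i = 1,…,m, one has: d/dt( Σ_{i=1}^m q̇_i ∂L*/∂q̇_i − L* ) − Σ_{ν=1}^k [ d/dt(ᾱ_ν − α_ν) + ∂α_ν/∂t ] ∂T/∂q̇_{m+ν} = − ∂L*/∂t,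 where d/dt(ᾱ_ν − α_ν) is the derivative along the curve. -/
open scoped BigOperators

noncomputable section

variable {m k : ℕ}

/-! ### Auxiliary lemmas -/

section AuxLemmas

/-- Expansion of a continuous linear functional on a product of pi types. -/
lemma clm_expand_s8 {n m : ℕ} (L : ((Fin n → ℝ) × (Fin m → ℝ) × ℝ) →L[ℝ] ℝ)
    (x : Fin n → ℝ) (v : Fin m → ℝ) (s : ℝ) :
    L (x, v, s) = (∑ j, x j * L (Pi.single j 1, 0, 0))
      + (∑ i, v i * L (0, Pi.single i 1, 0)) + s * L (0, 0, 1) := by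
  have e1 : ∀ (c : ℝ) (a : Fin n → ℝ), L (c • a, 0, 0) = c * L (a, 0, 0) := by
    intro c a
    have := L.map_smul c (a, 0, 0)
    simpa [Prod.smul_mk, smul_eq_mul] using this
  have e2 : ∀ (c : ℝ) (a : Fin m → ℝ), L (0, c • a, 0) = c * L (0, a, 0) := by
    intro c a
    have := L.map_smul c ((0 : Fin n → ℝ), a, 0)
    simpa [Prod.smul_mk, smul_eq_mul] using this
  have e3 : ∀ (c : ℝ), L (0, 0, c) = c * L (0, 0, 1) := by
    intro c
    have := L.map_smul c ((0 : Fin n → ℝ), (0 : Fin m → ℝ), 1)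
    simpa [Prod.smul_mk, smul_eq_mul] using this
  have hx : (x, v, s) = ((x, (0 : Fin m → ℝ), (0:ℝ)) : (Fin n → ℝ) × (Fin m → ℝ) × ℝ)
      + (0, v, 0) + (0, 0, s) := by
    ext <;> simp
  rw [hx, map_add, map_add, e3]
  congr 2
  · have hxs : x = ∑ j, x j • (Pi.single j (1:ℝ) : Fin n → ℝ) := by
      conv_lhs => rw [← Finset.univ_sum_single x]
      exact Finset.sum_congr rfl fun j _ => by ext r; simp [Pi.single_apply, eq_comm]
    have h2 : ((x, (0 : Fin m → ℝ), (0:ℝ)) : (Fin n → ℝ) × (Fin m → ℝ) × ℝ)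
        = ∑ j, ((x j • (Pi.single j 1 : Fin n → ℝ)), (0 : Fin m → ℝ), (0:ℝ)) := by
      rw [Prod.ext_iff]; constructor
      · simpa [Prod.fst_sum] using hxs
      · simp [Prod.snd_sum, Prod.fst_sum, Prod.ext_iff]
    rw [h2, map_sum]
    exact Finset.sum_congr rfl fun j _ => e1 _ _
  · have hvs : v = ∑ i, v i • (Pi.single i (1:ℝ) : Fin m → ℝ) := by
      conv_lhs => rw [← Finset.univ_sum_single v]
      exact Finset.sum_congr rfl fun j _ => by ext r; simp [Pi.single_apply, eq_comm]
    have h2 : (((0 : Fin n → ℝ), v, (0:ℝ)) : (Fin n → ℝ) × (Fin m → ℝ) × ℝ)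
        = ∑ i, ((0 : Fin n → ℝ), (v i • (Pi.single i 1 : Fin m → ℝ)), (0:ℝ)) := by
      rw [Prod.ext_iff]; constructor
      · simp [Prod.fst_sum]
      · rw [Prod.ext_iff]; constructor
        · simpa [Prod.snd_sum, Prod.fst_sum] using hvs
        · simp [Prod.snd_sum]
    rw [h2, map_sum]
    exact Finset.sum_congr rfl fun i _ => e2 _ _

lemma pq_slice {n m : ℕ} (f : PhasePt n m → ℝ) {p : PhasePt n m}
    (hf : DifferentiableAt ℝ f p) (j : Fin n) :
    pq f j p = deriv (fun c : ℝ => f (p.1 + c • (Pi.single j 1 : Fin n → ℝ), p.2.1, p.2.2)) 0 := by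
  have hl : HasDerivAt (fun c : ℝ => ((p.1 + c • (Pi.single j 1 : Fin n → ℝ)), p.2.1, p.2.2))
      (((Pi.single j 1 : Fin n → ℝ)), (0 : Fin m → ℝ), (0:ℝ)) 0 := by
    refine HasDerivAt.prodMk ?_ (HasDerivAt.prodMk (hasDerivAt_const _ _) (hasDerivAt_const _ _))
    simpa using ((hasDerivAt_id (0:ℝ)).smul_const ((Pi.single j 1 : Fin n → ℝ))).const_add p.1
  have h0 : ((p.1 + (0:ℝ) • (Pi.single j 1 : Fin n → ℝ)), p.2.1, p.2.2) = p := by simp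
  rw [show p = ((p.1 + (0:ℝ) • (Pi.single j 1 : Fin n → ℝ)), p.2.1, p.2.2) from h0.symm] at hf
  have h2 := hf.hasFDerivAt.comp_hasDerivAt 0 hl
  rw [h0] at h2
  rw [pq]
  have h3 := h2.deriv
  simp only [Function.comp_def] at h3
  exact h3.symm

lemma pv_slice {n m : ℕ} (f : PhasePt n m → ℝ) {p : PhasePt n m}
    (hf : DifferentiableAt ℝ f p) (i : Fin m) :
    pv f i p = deriv (fun c : ℝ => f (p.1, p.2.1 + c • (Pi.single i 1 : Fin m → ℝ), p.2.2)) 0 := by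
  have hl : HasDerivAt (fun c : ℝ => (p.1, (p.2.1 + c • (Pi.single i 1 : Fin m → ℝ)), p.2.2))
      ((0 : Fin n → ℝ), ((Pi.single i 1 : Fin m → ℝ)), (0:ℝ)) 0 := by
    refine HasDerivAt.prodMk (hasDerivAt_const _ _) (HasDerivAt.prodMk ?_ (hasDerivAt_const _ _))
    simpa using ((hasDerivAt_id (0:ℝ)).smul_const ((Pi.single i 1 : Fin m → ℝ))).const_add p.2.1
  have h0 : (p.1, (p.2.1 + (0:ℝ) • (Pi.single i 1 : Fin m → ℝ)), p.2.2) = p := by simp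
  rw [show p = (p.1, (p.2.1 + (0:ℝ) • (Pi.single i 1 : Fin m → ℝ)), p.2.2) from h0.symm] at hf
  have h2 := hf.hasFDerivAt.comp_hasDerivAt 0 hl
  rw [h0] at h2
  rw [pv]
  have h3 := h2.deriv
  simp only [Function.comp_def] at h3
  exact h3.symm

/-- Invariance with respect to the dependent coordinates. -/
def QInv {m k : ℕ} (f : PhasePt (m + k) m → ℝ) : Prop :=
  ∀ (x x' : Fin (m + k) → ℝ) (v : Fin m → ℝ) (t : ℝ),
    (∀ i : Fin m, x (Fin.castAdd k i) = x' (Fin.castAdd k i)) → f (x, v, t) = f (x', v, t)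

lemma castAdd_ne_natAdd {m k : ℕ} (i : Fin m) (ν : Fin k) :
    (Fin.castAdd k i : Fin (m + k)) ≠ Fin.natAdd m ν := by
  intro h
  have h1 := congrArg Fin.val h
  simp only [Fin.coe_castAdd, Fin.coe_natAdd] at h1
  have := i.isLt
  omega

lemma pq_natAdd_zero {m k : ℕ} (f : PhasePt (m + k) m → ℝ) {p : PhasePt (m + k) m}
    (hf : DifferentiableAt ℝ f p) (hinv : QInv f) (ν : Fin k) :
    pq f (Fin.natAdd m ν) p = 0 := by
  rw [pq_slice f hf]
  have h1 : (fun c : ℝ =>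
      f (p.1 + c • (Pi.single (Fin.natAdd m ν) 1 : Fin (m + k) → ℝ), p.2.1, p.2.2))
      = fun _ => f (p.1, p.2.1, p.2.2) := by
    funext c
    apply hinv
    intro i
    simp [Pi.single_apply, castAdd_ne_natAdd i ν]
  rw [h1]
  simp

lemma qInv_pv {m k : ℕ} (f : PhasePt (m + k) m → ℝ) (hf : Differentiable ℝ f)
    (hinv : QInv f) (i : Fin m) : QInv (pv f i) := by
  intro x x' v t h
  rw [pv_slice f (hf _) i, pv_slice f (hf _) i]
  congr 1
  funext c
  exact hinv _ _ _ _ h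

lemma contDiff_pv {n m : ℕ} {f : PhasePt n m → ℝ} (hf : ContDiff ℝ 2 f) (i : Fin m) :
    ContDiff ℝ 1 (pv f i) :=
  (hf.fderiv_right (by norm_num)).clm_apply contDiff_const

end AuxLemmas

section MainAux

variable {m k : ℕ}

/-- Chain rule along the lifted curve. -/
lemma hasDerivAt_comp_plift (α : Fin k → PhasePt (m + k) m → ℝ)
    (q : ℝ → Fin (m + k) → ℝ) (hq : ContDiff ℝ 2 q) (hadm : Admissible α q)
    (f : PhasePt (m + k) m → ℝ) (hf : Differentiable ℝ f) (t : ℝ) :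
    HasDerivAt (fun s => f (plift q s))
      ((∑ i : Fin m, ivel q t i * pq f (Fin.castAdd k i) (plift q t))
      + (∑ ν : Fin k, α ν (plift q t) * pq f (Fin.natAdd m ν) (plift q t))
      + (∑ i : Fin m, iacc q t i * pv f i (plift q t))
      + ptime f (plift q t)) t := by
  have hq1 : Differentiable ℝ q := hq.differentiable (by norm_num)
  have hdq : ContDiff ℝ 1 (deriv q) :=
    ((contDiff_succ_iff_deriv (n := 1)).mp (by exact_mod_cast hq)).2.2
  have hdq1 : Differentiable ℝ (deriv q) := hdq.differentiable one_ne_zero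
  have hivel : HasDerivAt (ivel q) (fun i => iacc q t i) t := by
    have h1 : HasDerivAt (deriv q) (deriv (deriv q) t) t := (hdq1 t).hasDerivAt
    exact ((ContinuousLinearMap.pi
      (fun i : Fin m => ContinuousLinearMap.proj (R := ℝ)
        (φ := fun _ : Fin (m + k) => ℝ) (Fin.castAdd k i))).hasFDerivAt.comp_hasDerivAt t h1)
  have hq' : HasDerivAt q (deriv q t) t := (hq1 t).hasDerivAt
  have hpl : HasDerivAt (plift q) (deriv q t, (fun i => iacc q t i), 1) t :=
    hq'.prodMk (hivel.prodMk (hasDerivAt_id t))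
  have h2 := (hf (plift q t)).hasFDerivAt.comp_hasDerivAt t hpl
  have key : fderiv ℝ f (plift q t) (deriv q t, (fun i => iacc q t i), 1)
      = (∑ i : Fin m, ivel q t i * pq f (Fin.castAdd k i) (plift q t))
      + (∑ ν : Fin k, α ν (plift q t) * pq f (Fin.natAdd m ν) (plift q t))
      + (∑ i : Fin m, iacc q t i * pv f i (plift q t))
      + ptime f (plift q t) := by
    rw [clm_expand_s8, Fin.sum_univ_add, one_mul]
    simp only [hadm t]
    rfl
  rw [key] at h2
  exact h2

lemma hasDerivAt_ivel_apply (q : ℝ → Fin (m + k) → ℝ) (hq : ContDiff ℝ 2 q)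
    (t : ℝ) (i : Fin m) :
    HasDerivAt (fun s => ivel q s i) (iacc q t i) t := by
  have hdq : ContDiff ℝ 1 (deriv q) :=
    ((contDiff_succ_iff_deriv (n := 1)).mp (by exact_mod_cast hq)).2.2
  have h1 : HasDerivAt (deriv q) (deriv (deriv q) t) t := (hdq.differentiable one_ne_zero t).hasDerivAt
  exact (ContinuousLinearMap.proj (R := ℝ) (φ := fun _ : Fin (m + k) => ℝ)
    (Fin.castAdd k i)).hasFDerivAt.comp_hasDerivAt t h1

end MainAux

/-- Corollary 1 of the paper: energy balance (21) for nonlinear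
Čaplygin systems.  If the constraint functions, the kinetic energy and the potential do
not depend on the coordinates `q (m+1), …, q (m+k)`, then along every admissible `C²`
solution of the equations of motion
`d/dt(∂T*/∂q̇ i) − ∂T*/∂q i − ∑ ν B i ν ∂T/∂q̇ (m+ν) = ∂U/∂q i`, one has
`d/dt(∑ i q̇ i ∂L*/∂q̇ i − L*) − ∑ ν [d/dt(ᾱ ν − α ν) + ∂α ν/∂t] ∂T/∂q̇ (m+ν) = − ∂L*/∂t`. -/
theorem energy_balance_caplygin
    (m k : ℕ) (hm : 1 ≤ m) (hk : 1 ≤ k)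
    (α : Fin k → PhasePt (m + k) m → ℝ) (hα : ∀ ν, ContDiff ℝ 2 (α ν))
    (T : PhasePt (m + k) (m + k) → ℝ) (hT : ContDiff ℝ 2 T)
    (U : (Fin (m + k) → ℝ) × ℝ → ℝ) (hU : ContDiff ℝ 2 U)
    -- the constraint functions do not depend on `q (m+1), …, q (m+k)`:
    (hαq : ∀ (ν : Fin k) (x x' : Fin (m + k) → ℝ) (v : Fin m → ℝ) (t : ℝ),
      (∀ i : Fin m, x (Fin.castAdd k i) = x' (Fin.castAdd k i)) →
      α ν (x, v, t) = α ν (x', v, t))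
    -- the kinetic energy does not depend on `q (m+1), …, q (m+k)`:
    (hTq : ∀ (x x' : Fin (m + k) → ℝ) (u : Fin (m + k) → ℝ) (t : ℝ),
      (∀ i : Fin m, x (Fin.castAdd k i) = x' (Fin.castAdd k i)) →
      T (x, u, t) = T (x', u, t))
    -- the potential does not depend on `q (m+1), …, q (m+k)`:
    (hUq : ∀ (x x' : Fin (m + k) → ℝ) (t : ℝ),
      (∀ i : Fin m, x (Fin.castAdd k i) = x' (Fin.castAdd k i)) →
      U (x, t) = U (x', t))
    (q : ℝ → Fin (m + k) → ℝ) (hq : ContDiff ℝ 2 q)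
    (hadm : Admissible α q)
    (heom : ∀ (t : ℝ) (i : Fin m),
      deriv (fun s => pv (subst α T) i (plift q s)) t
        - pq (subst α T) (Fin.castAdd k i) (plift q t)
        - (∑ ν : Fin k, Bcoef α q t ν i * pvT α T ν (plift q t)) =
      pqU U (Fin.castAdd k i) (q t, t)) :
    ∀ t : ℝ,
      deriv (fun s => energy (Lag α T U) q s) t
        - (∑ ν : Fin k,
            (deriv (fun s => abar α ν (plift q s) - α ν (plift q s)) t
              + ptime (α ν) (plift q t)) * pvT α T ν (plift q t)) =
      - ptime (Lag α T U) (plift q t) := by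
  intro t
  -- Differentiability of the basic objects
  have hα1 : ∀ ν, Differentiable ℝ (α ν) := fun ν => (hα ν).differentiable (by norm_num)
  have hext : ContDiff ℝ 2 (fun p : PhasePt (m + k) m =>
      ((p.1, extVel α p, p.2.2) : PhasePt (m + k) (m + k))) := by
    refine contDiff_fst.prodMk (ContDiff.prodMk ?_ contDiff_snd.snd)
    rw [contDiff_pi]
    intro j
    induction j using Fin.addCases with
    | left i =>
        have h : (fun p : PhasePt (m + k) m => extVel α p (Fin.castAdd k i))
            = fun p : PhasePt (m + k) m => p.2.1 i := by
          funext p; simp [extVel, Fin.append_left]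
        rw [h]
        exact (ContinuousLinearMap.proj (R := ℝ) (φ := fun _ : Fin m => ℝ) i).contDiff.comp
          contDiff_snd.fst
    | right ν =>
        have h : (fun p : PhasePt (m + k) m => extVel α p (Fin.natAdd m ν)) = α ν := by
          funext p; simp [extVel, Fin.append_right]
        rw [h]; exact hα ν
  have hW2 : ContDiff ℝ 2 (subst α T) := hT.comp hext
  have hW1 : Differentiable ℝ (subst α T) := hW2.differentiable (by norm_num)
  have hLag2 : ContDiff ℝ 2 (Lag α T U) := by
    have : Lag α T U = fun p : PhasePt (m + k) m => subst α T p + U (p.1, p.2.2) := rfl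
    rw [this]
    exact hW2.add (hU.comp (contDiff_fst.prodMk contDiff_snd.snd))
  have hLag1 : Differentiable ℝ (Lag α T U) := hLag2.differentiable (by norm_num)
  -- Invariance under the dependent coordinates
  have hWinv : QInv (subst α T) := by
    intro x x' v t' h
    simp only [subst]
    have he : extVel α (x, v, t') = extVel α (x', v, t') := by
      funext j
      induction j using Fin.addCases with
      | left i => simp [extVel, Fin.append_left]
      | right ν =>
          simp only [extVel, Fin.append_right]
          exact hαq ν x x' v t' h
    rw [he]
    exact hTq x x' _ t' h
  have hLinv : QInv (Lag α T U) := by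
    intro x x' v t' h
    simp only [Lag]
    rw [hWinv x x' v t' h, hUq x x' t' h]
  -- fderiv of Lag decomposes
  have hfdL : ∀ p : PhasePt (m + k) m, fderiv ℝ (Lag α T U) p =
      fderiv ℝ (subst α T) p + (fderiv ℝ U (p.1, p.2.2)).comp
        ((ContinuousLinearMap.fst ℝ (Fin (m + k) → ℝ) ((Fin m → ℝ) × ℝ)).prod
          ((ContinuousLinearMap.snd ℝ (Fin m → ℝ) ℝ).comp
            (ContinuousLinearMap.snd ℝ (Fin (m + k) → ℝ) ((Fin m → ℝ) × ℝ)))) := by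
    intro p
    set π : PhasePt (m + k) m →L[ℝ] (Fin (m + k) → ℝ) × ℝ :=
      (ContinuousLinearMap.fst ℝ (Fin (m + k) → ℝ) ((Fin m → ℝ) × ℝ)).prod
        ((ContinuousLinearMap.snd ℝ (Fin m → ℝ) ℝ).comp
          (ContinuousLinearMap.snd ℝ (Fin (m + k) → ℝ) ((Fin m → ℝ) × ℝ))) with hπ
    have h1 : HasFDerivAt (subst α T) (fderiv ℝ (subst α T) p) p := (hW1 p).hasFDerivAt
    have h2 : HasFDerivAt (fun p : PhasePt (m + k) m => U (p.1, p.2.2))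
        ((fderiv ℝ U (p.1, p.2.2)).comp π) p :=
      ((hU.differentiable (by norm_num) (p.1, p.2.2)).hasFDerivAt).comp p π.hasFDerivAt
    have h3 := h1.add h2
    have h4 : Lag α T U = fun p : PhasePt (m + k) m => subst α T p + U (p.1, p.2.2) := rfl
    rw [h4]
    exact h3.fderiv
  have hpvL : ∀ (p : PhasePt (m + k) m) (i : Fin m),
      pv (Lag α T U) i p = pv (subst α T) i p := by
    intro p i
    simp only [pv, hfdL p, ContinuousLinearMap.add_apply, ContinuousLinearMap.comp_apply]
    have h0 : ((ContinuousLinearMap.fst ℝ (Fin (m + k) → ℝ) ((Fin m → ℝ) × ℝ)).prod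
          ((ContinuousLinearMap.snd ℝ (Fin m → ℝ) ℝ).comp
            (ContinuousLinearMap.snd ℝ (Fin (m + k) → ℝ) ((Fin m → ℝ) × ℝ))))
        ((0 : Fin (m + k) → ℝ), (Pi.single i 1 : Fin m → ℝ), (0 : ℝ)) = 0 := rfl
    rw [h0, map_zero, add_zero]
  have hpqL : ∀ i : Fin m,
      pq (Lag α T U) (Fin.castAdd k i) (plift q t)
        = pq (subst α T) (Fin.castAdd k i) (plift q t) + pqU U (Fin.castAdd k i) (q t, t) := by
    intro i
    simp only [pq, pqU, hfdL (plift q t), ContinuousLinearMap.add_apply,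
      ContinuousLinearMap.comp_apply]
    rfl
  -- chain rules
  have hLchain := hasDerivAt_comp_plift α q hq hadm (Lag α T U) hLag1 t
  have hWpvdiff : ∀ i : Fin m, DifferentiableAt ℝ (fun s => pv (subst α T) i (plift q s)) t :=
    fun i => (hasDerivAt_comp_plift α q hq hadm (pv (subst α T) i)
      ((contDiff_pv hW2 i).differentiable one_ne_zero) t).differentiableAt
  have hDi : ∀ i : Fin m, HasDerivAt (fun s => pv (subst α T) i (plift q s))
      (deriv (fun s => pv (subst α T) i (plift q s)) t) t :=
    fun i => (hWpvdiff i).hasDerivAt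
  have hsum : HasDerivAt (fun s => ∑ i : Fin m, ivel q s i * pv (subst α T) i (plift q s))
      (∑ i : Fin m, (iacc q t i * pv (subst α T) i (plift q t)
        + ivel q t i * deriv (fun s => pv (subst α T) i (plift q s)) t)) t :=
    HasDerivAt.fun_sum (fun i _ => (hasDerivAt_ivel_apply q hq t i).mul (hDi i))
  have hE := hsum.sub hLchain
  have hEfun : (fun s => energy (Lag α T U) q s)
      = fun s => (∑ i : Fin m, ivel q s i * pv (subst α T) i (plift q s))
          - Lag α T U (plift q s) := by
    funext s
    simp only [energy]
    congr 1
    exact Finset.sum_congr rfl fun i _ => by rw [hpvL]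
  have hEd : deriv (fun s => energy (Lag α T U) q s) t
      = (∑ i : Fin m, (iacc q t i * pv (subst α T) i (plift q t)
          + ivel q t i * deriv (fun s => pv (subst α T) i (plift q s)) t))
        - ((∑ i : Fin m, ivel q t i * pq (Lag α T U) (Fin.castAdd k i) (plift q t))
          + (∑ ν : Fin k, α ν (plift q t) * pq (Lag α T U) (Fin.natAdd m ν) (plift q t))
          + (∑ i : Fin m, iacc q t i * pv (Lag α T U) i (plift q t))
          + ptime (Lag α T U) (plift q t)) := by
    rw [hEfun]
    exact hE.deriv
  -- vanishing partial derivatives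
  have hL0 : ∀ ν : Fin k, pq (Lag α T U) (Fin.natAdd m ν) (plift q t) = 0 :=
    fun ν => pq_natAdd_zero _ (hLag1 _) hLinv ν
  have hα0 : ∀ ν μ : Fin k, pq (α ν) (Fin.natAdd m μ) (plift q t) = 0 :=
    fun ν μ => pq_natAdd_zero _ (hα1 ν _) (hαq ν) μ
  have hg0 : ∀ (ν : Fin k) (i : Fin m) (μ : Fin k),
      pq (pv (α ν) i) (Fin.natAdd m μ) (plift q t) = 0 :=
    fun ν i μ => pq_natAdd_zero _ ((contDiff_pv (hα ν) i).differentiable one_ne_zero _)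
      (qInv_pv (α ν) (hα1 ν) (hαq ν) i) μ
  -- Key identity (F6): ∑ i q̇ i * B i ν = d/dt(ᾱ ν − α ν) + ∂α ν/∂t
  have hF6 : ∀ ν : Fin k,
      deriv (fun s => abar α ν (plift q s) - α ν (plift q s)) t + ptime (α ν) (plift q t)
        = ∑ i : Fin m, ivel q t i * Bcoef α q t ν i := by
    intro ν
    have hgchain : ∀ i : Fin m, HasDerivAt (fun s => pv (α ν) i (plift q s))
        ((∑ r : Fin m, ivel q t r * pq (pv (α ν) i) (Fin.castAdd k r) (plift q t))
        + (∑ μ : Fin k, α μ (plift q t) * pq (pv (α ν) i) (Fin.natAdd m μ) (plift q t))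
        + (∑ r : Fin m, iacc q t r * pv (pv (α ν) i) r (plift q t))
        + ptime (pv (α ν) i) (plift q t)) t :=
      fun i => hasDerivAt_comp_plift α q hq hadm (pv (α ν) i)
        ((contDiff_pv (hα ν) i).differentiable one_ne_zero) t
    have habar : HasDerivAt (fun s => abar α ν (plift q s))
        (∑ i : Fin m, (iacc q t i * pv (α ν) i (plift q t)
          + ivel q t i * ((∑ r : Fin m, ivel q t r * pq (pv (α ν) i) (Fin.castAdd k r) (plift q t))
            + (∑ μ : Fin k, α μ (plift q t) * pq (pv (α ν) i) (Fin.natAdd m μ) (plift q t))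
            + (∑ r : Fin m, iacc q t r * pv (pv (α ν) i) r (plift q t))
            + ptime (pv (α ν) i) (plift q t)))) t :=
      HasDerivAt.fun_sum (fun i _ => (hasDerivAt_ivel_apply q hq t i).mul (hgchain i))
    have halpha := hasDerivAt_comp_plift α q hq hadm (α ν) (hα1 ν) t
    have hab := (habar.fun_sub halpha).deriv
    rw [hab]
    simp only [hg0 ν, hα0 ν, mul_zero, Finset.sum_const_zero, add_zero]
    -- now pure algebra
    have hBi : ∀ i : Fin m, ivel q t i * Bcoef α q t ν i
        = ivel q t i * ((∑ r : Fin m, ivel q t r * pq (pv (α ν) i) (Fin.castAdd k r) (plift q t))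
            + (∑ r : Fin m, iacc q t r * pv (pv (α ν) i) r (plift q t))
            + ptime (pv (α ν) i) (plift q t))
          - ivel q t i * pq (α ν) (Fin.castAdd k i) (plift q t) := by
      intro i
      simp only [Bcoef, hg0 ν, hα0 ν, mul_zero, zero_mul, sub_zero, zero_sub, neg_zero,
        Finset.sum_const_zero, add_zero]
      have hs : (∑ r : Fin m, (pq (pv (α ν) i) (Fin.castAdd k r) (plift q t) * ivel q t r
            + pv (pv (α ν) i) r (plift q t) * iacc q t r))
          = (∑ r : Fin m, ivel q t r * pq (pv (α ν) i) (Fin.castAdd k r) (plift q t))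
            + (∑ r : Fin m, iacc q t r * pv (pv (α ν) i) r (plift q t)) := by
        rw [Finset.sum_add_distrib]
        congr 1 <;> exact Finset.sum_congr rfl fun r _ => mul_comm _ _
      rw [hs]
      ring
    rw [show (∑ i : Fin m, ivel q t i * Bcoef α q t ν i)
        = ∑ i : Fin m, (ivel q t i * ((∑ r : Fin m, ivel q t r
            * pq (pv (α ν) i) (Fin.castAdd k r) (plift q t))
            + (∑ r : Fin m, iacc q t r * pv (pv (α ν) i) r (plift q t))
            + ptime (pv (α ν) i) (plift q t))
          - ivel q t i * pq (α ν) (Fin.castAdd k i) (plift q t))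
      from Finset.sum_congr rfl fun i _ => hBi i]
    rw [Finset.sum_sub_distrib, Finset.sum_add_distrib]
    ring
  -- heom rearranged
  have hDival : ∀ i : Fin m, deriv (fun s => pv (subst α T) i (plift q s)) t
      = pq (subst α T) (Fin.castAdd k i) (plift q t) + pqU U (Fin.castAdd k i) (q t, t)
        + (∑ ν : Fin k, Bcoef α q t ν i * pvT α T ν (plift q t)) := by
    intro i
    have := heom t i
    linarith
  -- swap the double sum
  have hswap : (∑ ν : Fin k, (∑ i : Fin m, ivel q t i * Bcoef α q t ν i)
        * pvT α T ν (plift q t))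
      = ∑ i : Fin m, ivel q t i * (∑ ν : Fin k, Bcoef α q t ν i * pvT α T ν (plift q t)) := by
    simp only [Finset.sum_mul, Finset.mul_sum]
    rw [Finset.sum_comm]
    exact Finset.sum_congr rfl fun i _ => Finset.sum_congr rfl fun ν _ => by ring
  -- assemble
  rw [hEd]
  rw [show (∑ ν : Fin k,
        (deriv (fun s => abar α ν (plift q s) - α ν (plift q s)) t
          + ptime (α ν) (plift q t)) * pvT α T ν (plift q t))
      = ∑ ν : Fin k, (∑ i : Fin m, ivel q t i * Bcoef α q t ν i) * pvT α T ν (plift q t)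
    from Finset.sum_congr rfl fun ν _ => by rw [hF6 ν]]
  rw [hswap]
  simp only [hL0, mul_zero, Finset.sum_const_zero, add_zero, hpvL, hpqL, hDival]
  rw [show (∑ i : Fin m, (iacc q t i * pv (subst α T) i (plift q t)
        + ivel q t i * (pq (subst α T) (Fin.castAdd k i) (plift q t)
          + pqU U (Fin.castAdd k i) (q t, t)
          + (∑ ν : Fin k, Bcoef α q t ν i * pvT α T ν (plift q t)))))
      = (∑ i : Fin m, iacc q t i * pv (subst α T) i (plift q t))
        + (∑ i : Fin m, ivel q t i * (pq (subst α T) (Fin.castAdd k i) (plift q t)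
            + pqU U (Fin.castAdd k i) (q t, t)))
        + (∑ i : Fin m, ivel q t i
            * (∑ ν : Fin k, Bcoef α q t ν i * pvT α T ν (plift q t)))
    from by
      rw [← Finset.sum_add_distrib, ← Finset.sum_add_distrib]
      exact Finset.sum_congr rfl fun i _ => by ring]
  ring

end
end

section
/- Let m, k ≥ 1, n = m + k, and let the kinetic energy have the standard form T = (1/2) Σ_{i,j=1}^n g_{i,j}(q,t) q̇_i q̇_j + Σ_{i=1}^n b_i(q,t) q̇_i + c(q,t) with g symmetric, and let U = U(q,t) be a potential. Let α_ν(q₁,…,qₙ, q̇₁,…,q̇_m, t), ν = 1,…,k, be C¹ constraint functions, set ᾱ_ν := Σ_{i=1}^m q̇_i ∂α_ν/∂q̇_i, and let L* := T* + U where T* is obtained from T by substituting q̇_{m+ν} = α_ν. Then, identically in (q₁,…,qₙ, q̇₁,…,q̇_m, t): Σ_{i=1}^m q̇_i ∂L*/∂q̇_i − L* = (1/2) Σ_{r,s=1}^m g_{r,s} q̇_r q̇_s + Σ_{ν,μ=1}^k g_{m+ν,m+μ} ( ᾱ_ν α_μ − (1/2) α_ν α_μ ) + Σ_{r=1}^m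 Σ_{ν=1}^k g_{r,m+ν} ᾱ_ν q̇_r + Σ_{ν=1}^k b_{m+ν} (ᾱ_ν − α_ν) − c − U. -/
open scoped BigOperators

noncomputable section

variable {m k : ℕ}

/-- Partial derivative of `f` with respect to the independent velocity `q̇ r` only
(the positions and time being held fixed). -/
def pvOnly {n m : ℕ} (f : PhasePt n m → ℝ) (r : Fin m) (p : PhasePt n m) : ℝ :=
  fderiv ℝ (fun v => f (p.1, v, p.2.2)) p.2.1 (Pi.single r 1)

private lemma sum_comm3 {M : Type*} [AddCommMonoid M] {A B C : Type*}
    [Fintype A] [Fintype B] [Fintype C] (f : A → B → C → M) :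
    (∑ a : A, ∑ b : B, ∑ c : C, f a b c) = ∑ c : C, ∑ b : B, ∑ a : A, f a b c := by
  rw [Finset.sum_comm]
  rw [show (∑ b : B, ∑ a : A, ∑ c : C, f a b c) = ∑ b : B, ∑ c : C, ∑ a : A, f a b c from
    Finset.sum_congr rfl fun b _ => Finset.sum_comm]
  exact Finset.sum_comm

private lemma sum_cycle3 {M : Type*} [AddCommMonoid M] {A B C : Type*}
    [Fintype A] [Fintype B] [Fintype C] (f : A → B → C → M) :
    (∑ a : A, ∑ b : B, ∑ c : C, f a b c) = ∑ b : B, ∑ c : C, ∑ a : A, f a b c := by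
  rw [Finset.sum_comm]
  exact Finset.sum_congr rfl fun b _ => Finset.sum_comm

/-- formula (23) of the paper.  For a kinetic energy of the standard
form `T = ½ ∑ g i j q̇ i q̇ j + ∑ b i q̇ i + c` with `g` symmetric, the energy
`∑ i q̇ i ∂L*/∂q̇ i − L*` of `L* = T* + U` has the explicit expression (23). -/
theorem energy_explicit_formula
    (m k : ℕ) (hm : 1 ≤ m) (hk : 1 ≤ k)
    (g : Fin (m + k) → Fin (m + k) → (Fin (m + k) → ℝ) × ℝ → ℝ)
    (hg : ∀ (i j : Fin (m + k)) (x : (Fin (m + k) → ℝ) × ℝ), g i j x = g j i x)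
    (b : Fin (m + k) → (Fin (m + k) → ℝ) × ℝ → ℝ)
    (c : (Fin (m + k) → ℝ) × ℝ → ℝ)
    (U : (Fin (m + k) → ℝ) × ℝ → ℝ)
    (T : PhasePt (m + k) (m + k) → ℝ)
    (hTform : ∀ p : PhasePt (m + k) (m + k),
      T p = (1 / 2) * (∑ i : Fin (m + k), ∑ j : Fin (m + k),
              g i j (p.1, p.2.2) * p.2.1 i * p.2.1 j)
            + (∑ i : Fin (m + k), b i (p.1, p.2.2) * p.2.1 i) + c (p.1, p.2.2))
    (α : Fin k → PhasePt (m + k) m → ℝ) (hα : ∀ ν, ContDiff ℝ 1 (α ν)) :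
    ∀ p : PhasePt (m + k) m,
      (∑ i : Fin m, p.2.1 i * pvOnly (Lag α T U) i p) - Lag α T U p =
        (1 / 2) * (∑ r : Fin m, ∑ s : Fin m,
            g (Fin.castAdd k r) (Fin.castAdd k s) (p.1, p.2.2) * p.2.1 r * p.2.1 s)
        + (∑ ν : Fin k, ∑ μ : Fin k,
            g (Fin.natAdd m ν) (Fin.natAdd m μ) (p.1, p.2.2)
              * (abar α ν p * α μ p - (1 / 2) * (α ν p * α μ p)))
        + (∑ r : Fin m, ∑ ν : Fin k,
            g (Fin.castAdd k r) (Fin.natAdd m ν) (p.1, p.2.2) * abar α ν p * p.2.1 r)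
        + (∑ ν : Fin k, b (Fin.natAdd m ν) (p.1, p.2.2) * (abar α ν p - α ν p))
        - c (p.1, p.2.2) - U (p.1, p.2.2) := by
  intro p
  obtain ⟨q, v, t⟩ := p
  have hins : HasFDerivAt (fun w : Fin m → ℝ => ((q, w, t) : PhasePt (m + k) m))
      ((0 : (Fin m → ℝ) →L[ℝ] (Fin (m + k) → ℝ)).prod
        ((ContinuousLinearMap.id ℝ (Fin m → ℝ)).prod
          (0 : (Fin m → ℝ) →L[ℝ] ℝ))) v :=
    HasFDerivAt.prodMk (hasFDerivAt_const q v) (HasFDerivAt.prodMk (hasFDerivAt_id v) (hasFDerivAt_const t v))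
  set J : (Fin m → ℝ) →L[ℝ] PhasePt (m + k) m :=
      (0 : (Fin m → ℝ) →L[ℝ] (Fin (m + k) → ℝ)).prod
        ((ContinuousLinearMap.id ℝ (Fin m → ℝ)).prod
          (0 : (Fin m → ℝ) →L[ℝ] ℝ)) with hJdef
  have hJap : ∀ r : Fin m, J (Pi.single r 1) = ((0, Pi.single r 1, 0) : PhasePt (m + k) m) := by
    intro r
    simp [hJdef, ContinuousLinearMap.prod_apply]
  have hAd : ∀ ν, HasFDerivAt (fun w : Fin m → ℝ => α ν (q, w, t))
      ((fderiv ℝ (α ν) (q, v, t)).comp J) v := fun ν =>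
    (((hα ν).differentiable one_ne_zero) (q, v, t)).hasFDerivAt.comp v hins
  set W : (Fin m → ℝ) → Fin (m + k) → ℝ :=
    fun w => Fin.append w (fun ν => α ν (q, w, t)) with hWdef
  set D' : Fin (m + k) → ((Fin m → ℝ) →L[ℝ] ℝ) :=
    Fin.append (fun r : Fin m => (ContinuousLinearMap.proj r : (Fin m → ℝ) →L[ℝ] ℝ))
      (fun ν => (fderiv ℝ (α ν) (q, v, t)).comp J) with hDdef
  have hW : ∀ i, HasFDerivAt (fun w => W w i) (D' i) v := by
    intro i
    induction i using Fin.addCases with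
    | left r => simpa [hWdef, hDdef, Fin.append_left] using hasFDerivAt_apply r v
    | right ν => simpa [hWdef, hDdef, Fin.append_right] using hAd ν
  have hfval : ∀ w : Fin m → ℝ, Lag α T U (q, w, t) =
      (1 / 2) * (∑ i : Fin (m + k), ∑ j : Fin (m + k),
        g i j (q, t) * W w i * W w j)
      + (∑ i : Fin (m + k), b i (q, t) * W w i) + c (q, t) + U (q, t) := by
    intro w
    simp [Lag, subst, hTform, extVel, hWdef]
  have hf : HasFDerivAt (fun w => Lag α T U (q, w, t))
      ((1 / 2 : ℝ) • (∑ i : Fin (m + k), ∑ j : Fin (m + k),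
          ((g i j (q, t) * W v i) • D' j + W v j • (g i j (q, t) • D' i)))
        + ∑ i : Fin (m + k), b i (q, t) • D' i) v := by
    have h1 : HasFDerivAt (fun w : Fin m → ℝ =>
        (1 / 2) * (∑ i : Fin (m + k), ∑ j : Fin (m + k),
          g i j (q, t) * W w i * W w j)
        + (∑ i : Fin (m + k), b i (q, t) * W w i) + c (q, t) + U (q, t))
        ((1 / 2 : ℝ) • (∑ i : Fin (m + k), ∑ j : Fin (m + k),
          ((g i j (q, t) * W v i) • D' j + W v j • (g i j (q, t) • D' i)))
        + ∑ i : Fin (m + k), b i (q, t) • D' i) v := by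
      apply HasFDerivAt.add_const
      apply HasFDerivAt.add_const
      exact ((HasFDerivAt.fun_sum fun i _ => HasFDerivAt.fun_sum fun j _ =>
        ((hW i).const_mul _).mul (hW j)).const_mul _).add
        (HasFDerivAt.fun_sum fun i _ => (hW i).const_mul _)
    have heq : (fun w : Fin m → ℝ =>
        (1 / 2) * (∑ i : Fin (m + k), ∑ j : Fin (m + k),
          g i j (q, t) * W w i * W w j)
        + (∑ i : Fin (m + k), b i (q, t) * W w i) + c (q, t) + U (q, t))
        = fun w => Lag α T U (q, w, t) := funext fun w => (hfval w).symm
    rw [heq] at h1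
    exact h1
  have hpv : ∀ r : Fin m, pvOnly (Lag α T U) r (q, v, t) =
      ((1 / 2 : ℝ) • (∑ i : Fin (m + k), ∑ j : Fin (m + k),
          ((g i j (q, t) * W v i) • D' j + W v j • (g i j (q, t) • D' i)))
        + ∑ i : Fin (m + k), b i (q, t) • D' i) (Pi.single r 1) := by
    intro r
    show fderiv ℝ (fun w => Lag α T U (q, w, t)) v (Pi.single r 1) = _
    rw [hf.fderiv]
  simp only [hpv, hfval, abar, pv,
    ContinuousLinearMap.add_apply, ContinuousLinearMap.smul_apply,
    ContinuousLinearMap.sum_apply, Fin.sum_univ_add, hDdef, Fin.append_left,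
    Fin.append_right, ContinuousLinearMap.comp_apply, hJap,
    ContinuousLinearMap.proj_apply, hWdef, smul_eq_mul, Pi.single_apply,
    mul_ite, ite_mul, mul_zero, zero_mul, mul_one, Finset.sum_ite_eq',
    Finset.mem_univ, if_true, Finset.sum_add_distrib]
  simp only [Finset.sum_ite_irrel, Finset.sum_const_zero, Finset.sum_ite_eq',
    Finset.mem_univ, if_true, mul_add, add_mul, mul_sub, sub_mul,
    Finset.mul_sum, Finset.sum_mul, Finset.sum_add_distrib, Finset.sum_sub_distrib,
    mul_ite, ite_mul, mul_zero, zero_mul]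
  have h1 : (∑ x : Fin m, ∑ i : Fin m,
        v x * (1 / 2 * (g (Fin.castAdd k i) (Fin.castAdd k x) (q, t) * v i)))
      = ∑ x : Fin m, ∑ i : Fin m,
        1 / 2 * (g (Fin.castAdd k x) (Fin.castAdd k i) (q, t) * v x * v i) := by
    rw [Finset.sum_comm]
    exact Finset.sum_congr rfl fun x _ => Finset.sum_congr rfl fun i _ => by ring
  have h5 : (∑ x : Fin m, ∑ i : Fin m,
        v x * (1 / 2 * (v i * g (Fin.castAdd k x) (Fin.castAdd k i) (q, t))))
      = ∑ x : Fin m, ∑ i : Fin m,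
        1 / 2 * (g (Fin.castAdd k x) (Fin.castAdd k i) (q, t) * v x * v i) :=
    Finset.sum_congr rfl fun x _ => Finset.sum_congr rfl fun i _ => by ring
  have h2 : (∑ x : Fin m, ∑ i : Fin k,
        v x * (1 / 2 * (g (Fin.natAdd m i) (Fin.castAdd k x) (q, t) * α i (q, v, t))))
      = ∑ x : Fin k, ∑ i : Fin m,
        1 / 2 * (g (Fin.natAdd m x) (Fin.castAdd k i) (q, t) * α x (q, v, t) * v i) := by
    rw [Finset.sum_comm]
    exact Finset.sum_congr rfl fun x _ => Finset.sum_congr rfl fun i _ => by ring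
  have h7 : (∑ x : Fin m, ∑ i : Fin k,
        v x * (1 / 2 * (α i (q, v, t) * g (Fin.castAdd k x) (Fin.natAdd m i) (q, t))))
      = ∑ x : Fin m, ∑ i : Fin k,
        1 / 2 * (g (Fin.castAdd k x) (Fin.natAdd m i) (q, t) * v x * α i (q, v, t)) :=
    Finset.sum_congr rfl fun x _ => Finset.sum_congr rfl fun i _ => by ring
  have h3 : (∑ x : Fin m, ∑ x_1 : Fin m, ∑ i : Fin k,
        v x * (1 / 2 * (g (Fin.castAdd k x_1) (Fin.natAdd m i) (q, t) * v x_1 *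
          (fderiv ℝ (α i) (q, v, t)) (0, Pi.single x 1, 0))))
      = 1 / 2 * ∑ x : Fin m, ∑ x_1 : Fin k, ∑ i : Fin m,
          g (Fin.castAdd k x) (Fin.natAdd m x_1) (q, t) *
            (v i * (fderiv ℝ (α x_1) (q, v, t)) (0, Pi.single i 1, 0)) * v x := by
    simp only [Finset.mul_sum]
    rw [sum_cycle3]
    exact Finset.sum_congr rfl fun p _ => Finset.sum_congr rfl fun s _ =>
      Finset.sum_congr rfl fun w _ => by ring
  have h6 : (∑ x : Fin m, ∑ x_1 : Fin k, ∑ i : Fin m,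
        v x * (1 / 2 * (v i * (g (Fin.natAdd m x_1) (Fin.castAdd k i) (q, t) *
          (fderiv ℝ (α x_1) (q, v, t)) (0, Pi.single x 1, 0)))))
      = 1 / 2 * ∑ x : Fin m, ∑ x_1 : Fin k, ∑ i : Fin m,
          g (Fin.castAdd k x) (Fin.natAdd m x_1) (q, t) *
            (v i * (fderiv ℝ (α x_1) (q, v, t)) (0, Pi.single i 1, 0)) * v x := by
    simp only [Finset.mul_sum]
    rw [sum_comm3]
    refine Finset.sum_congr rfl fun p _ => Finset.sum_congr rfl fun s _ =>
      Finset.sum_congr rfl fun w _ => ?_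
    rw [hg (Fin.natAdd m s) (Fin.castAdd k p)]
    ring
  have h4 : (∑ x : Fin m, ∑ x_1 : Fin k, ∑ i : Fin k,
        v x * (1 / 2 * (g (Fin.natAdd m x_1) (Fin.natAdd m i) (q, t) * α x_1 (q, v, t) *
          (fderiv ℝ (α i) (q, v, t)) (0, Pi.single x 1, 0))))
      = 1 / 2 * ∑ x : Fin k, ∑ x_1 : Fin k, ∑ i : Fin m,
          g (Fin.natAdd m x) (Fin.natAdd m x_1) (q, t) *
            (v i * (fderiv ℝ (α x) (q, v, t)) (0, Pi.single i 1, 0) * α x_1 (q, v, t)) := by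
    simp only [Finset.mul_sum]
    rw [sum_comm3]
    refine Finset.sum_congr rfl fun p _ => Finset.sum_congr rfl fun s _ =>
      Finset.sum_congr rfl fun w _ => ?_
    rw [hg (Fin.natAdd m s) (Fin.natAdd m p)]
    ring
  have h8 : (∑ x : Fin m, ∑ x_1 : Fin k, ∑ i : Fin k,
        v x * (1 / 2 * (α i (q, v, t) * (g (Fin.natAdd m x_1) (Fin.natAdd m i) (q, t) *
          (fderiv ℝ (α x_1) (q, v, t)) (0, Pi.single x 1, 0)))))
      = 1 / 2 * ∑ x : Fin k, ∑ x_1 : Fin k, ∑ i : Fin m,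
          g (Fin.natAdd m x) (Fin.natAdd m x_1) (q, t) *
            (v i * (fderiv ℝ (α x) (q, v, t)) (0, Pi.single i 1, 0) * α x_1 (q, v, t)) := by
    simp only [Finset.mul_sum]
    rw [sum_cycle3]
    exact Finset.sum_congr rfl fun p _ => Finset.sum_congr rfl fun s _ =>
      Finset.sum_congr rfl fun w _ => by ring
  have h9 : (∑ x : Fin m, v x * b (Fin.castAdd k x) (q, t))
      = ∑ x : Fin m, b (Fin.castAdd k x) (q, t) * v x :=
    Finset.sum_congr rfl fun x _ => by ring
  have h10 : (∑ x : Fin m, ∑ i : Fin k,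
        v x * (b (Fin.natAdd m i) (q, t) * (fderiv ℝ (α i) (q, v, t)) (0, Pi.single x 1, 0)))
      = ∑ x : Fin k, ∑ i : Fin m,
        b (Fin.natAdd m x) (q, t) * (v i * (fderiv ℝ (α x) (q, v, t)) (0, Pi.single i 1, 0)) := by
    rw [Finset.sum_comm]
    exact Finset.sum_congr rfl fun x _ => Finset.sum_congr rfl fun i _ => by ring
  have hR3 : (∑ x : Fin k, ∑ i : Fin k,
        1 / 2 * (g (Fin.natAdd m x) (Fin.natAdd m i) (q, t) * α x (q, v, t) * α i (q, v, t)))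
      = ∑ x : Fin k, ∑ x_1 : Fin k,
        g (Fin.natAdd m x) (Fin.natAdd m x_1) (q, t) * (1 / 2 * (α x (q, v, t) * α x_1 (q, v, t))) :=
    Finset.sum_congr rfl fun x _ => Finset.sum_congr rfl fun i _ => by ring
  linear_combination h1 + h5 + h2 + h7 + h3 + h6 + h4 + h8 + h9 + h10 - hR3


end
end
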